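/- Let u_1, …, u_N ∈ ℝ³ be events with pairwise distinct coordinates in each component, let g : ℝ³ → ℝ be differentiable with M-Lipschitz gradient, and let μ, α ≥ 0. Define the intensity λ(u) = μ + α Σ_{m=1}^N g(u − u_m) for u ∈ ℝ³. Let Δ = (Δ_X, Δ_Y, Δ_T) be grid stepsizes satisfying Assumption 1 (Δ_X < min_{n≠m}|x_n − x_m|, Δ_Y < min_{n≠m}|y_n − y_m|, Δ_T < min_{n≠m}|t_n − t_m|), let δ_m ∈ ℝ³ denote the perturbation of event u_m induced by projection onto the grid (so each component of δ_m is bounded in absolute value by the corresponding half-stepsize), and define the discretized intensity at a grid point p ∈ ℝ³ by λ̃(p) = μ + α Σ_{m=1}^N g(p − u_m − δ_m). Then for every grid point p: |λ̃(p) − λ(p) + α Σ_{m=1}^N ⟨δ_m, ∇g(p − u_m)⟩| ≤ (α·N·M/8)·‖Δ‖₂², where ‖Δ‖₂² = Δ_X² + Δ_Y² + Δ_T². -/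

import Mathlib

open scoped RealInnerProductSpace

lemma taylor_key {E : Type*} [NormedAddCommGroup E] [InnerProductSpace ℝ E]
    [CompleteSpace E]
    (g : E → ℝ) (M : ℝ) (hM : 0 ≤ M) (hg : Differentiable ℝ g)
    (hlip : ∀ a b : E, ‖gradient g a - gradient g b‖ ≤ M * ‖a - b‖)
    (x v : E) : |g (x - v) - g x + ⟪v, gradient g x⟫| ≤ M / 2 * ‖v‖ ^ 2 := by
  have hgradcont : Continuous (gradient g) := by
    have : LipschitzWith (Real.toNNReal M) (gradient g) := by
      apply LipschitzWith.of_dist_le_mul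
      intro a b
      rw [dist_eq_norm, dist_eq_norm]
      calc ‖gradient g a - gradient g b‖ ≤ M * ‖a - b‖ := hlip a b
        _ ≤ Real.toNNReal M * ‖a - b‖ := by
            gcongr; exact Real.le_coe_toNNReal M
    exact this.continuous
  set f : ℝ → ℝ := fun t => g (x - t • v) + t * ⟪v, gradient g x⟫ with hf
  set f' : ℝ → ℝ := fun t => ⟪v, gradient g x - gradient g (x - t • v)⟫ with hf'
  have hderiv : ∀ t : ℝ, HasDerivAt f (f' t) t := by
    intro t
    have h1 : HasDerivAt (fun t : ℝ => x - t • v) (-v) t := by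
      simpa using ((hasDerivAt_id t).smul_const v).const_sub x
    have h2 : HasDerivAt (fun t : ℝ => g (x - t • v))
        (InnerProductSpace.toDual ℝ E (gradient g (x - t • v)) (-v)) t :=
      ((hg (x - t • v)).hasGradientAt.hasFDerivAt).comp_hasDerivAt t h1
    have h3 : HasDerivAt (fun t : ℝ => t * ⟪v, gradient g x⟫)
        (⟪v, gradient g x⟫) t := by
      simpa using (hasDerivAt_id t).mul_const (⟪v, gradient g x⟫)
    have := h2.add h3
    refine this.congr_deriv ?_
    rw [InnerProductSpace.toDual_apply_apply, hf']
    simp [inner_sub_right, real_inner_comm, inner_neg_right]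
    ring
  have hfc : Continuous f' := by
    apply Continuous.inner continuous_const
    exact continuous_const.sub (hgradcont.comp (by continuity))
  have hkey : f 1 - f 0 = ∫ t in (0:ℝ)..1, f' t := by
    rw [intervalIntegral.integral_eq_sub_of_hasDerivAt
      (fun t _ => hderiv t) (hfc.intervalIntegrable 0 1)]
  have hbound : ∀ t ∈ Set.Ioc (0:ℝ) 1, ‖f' t‖ ≤ M * ‖v‖ ^ 2 * t := by
    intro t ht
    have ht0 : 0 ≤ t := le_of_lt ht.1
    calc ‖f' t‖ ≤ ‖v‖ * ‖gradient g x - gradient g (x - t • v)‖ :=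
          norm_inner_le_norm _ _
      _ ≤ ‖v‖ * (M * ‖x - (x - t • v)‖) := by
          gcongr; exact hlip _ _
      _ = M * ‖v‖ ^ 2 * t := by
          have : x - (x - t • v) = t • v := by abel
          rw [this, norm_smul]
          simp [abs_of_nonneg ht0]
          ring
  have hval : (∫ t in (0:ℝ)..1, M * ‖v‖ ^ 2 * t) = M / 2 * ‖v‖ ^ 2 := by
    rw [intervalIntegral.integral_const_mul, integral_id]
    ring
  have hint : |∫ t in (0:ℝ)..1, f' t| ≤ M / 2 * ‖v‖ ^ 2 := by
    have hΙ : Set.uIoc (0:ℝ) 1 = Set.Ioc 0 1 := Set.uIoc_of_le (by norm_num)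
    have hae : ∀ᵐ t ∂(MeasureTheory.volume.restrict (Set.uIoc (0:ℝ) 1)),
        ‖f' t‖ ≤ M * ‖v‖ ^ 2 * t := by
      rw [hΙ]
      exact (MeasureTheory.ae_restrict_iff' measurableSet_Ioc).2
        (Filter.Eventually.of_forall hbound)
    have h2 := intervalIntegral.norm_integral_le_abs_of_norm_le hae
      (by apply Continuous.intervalIntegrable; continuity)
    rw [Real.norm_eq_abs, hval] at h2
    calc |∫ t in (0:ℝ)..1, f' t| ≤ |M / 2 * ‖v‖ ^ 2| := h2
      _ = M / 2 * ‖v‖ ^ 2 := abs_of_nonneg (by positivity)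
  have heq : g (x - v) - g x + ⟪v, gradient g x⟫ = f 1 - f 0 := by
    simp only [hf, one_smul, zero_smul, sub_zero, one_mul, zero_mul, add_zero]
    ring
  rw [heq, hkey]
  exact hint

/-- First claim of Proposition 1, with explicit constant: under Assumption 1 on the
grid stepsizes, the discretized intensity `λ̃(p) = μ + α Σₘ g(p - uₘ - δₘ)` differs
from `λ(p) - α Σₘ ⟪δₘ, ∇g(p - uₘ)⟫` by at most `(α N M / 8)·‖Δ‖₂²` at every grid
point `p`, where `‖Δ‖₂² = ΔX² + ΔY² + ΔT²`. -/
theorem discretized_intensity_taylor_bound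
    (N : ℕ) (u : Fin N → EuclideanSpace ℝ (Fin 3))
    (g : EuclideanSpace ℝ (Fin 3) → ℝ) (M : ℝ)
    (hg : Differentiable ℝ g)
    (hlip : ∀ a b : EuclideanSpace ℝ (Fin 3),
      ‖gradient g a - gradient g b‖ ≤ M * ‖a - b‖)
    (μ α : ℝ) (hμ : 0 ≤ μ) (hα : 0 ≤ α)
    (ΔX ΔY ΔT : ℝ)
    (hAX : ∀ n m, n ≠ m → ΔX < |u n 0 - u m 0|)
    (hAY : ∀ n m, n ≠ m → ΔY < |u n 1 - u m 1|)
    (hAT : ∀ n m, n ≠ m → ΔT < |u n 2 - u m 2|)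
    (δ : Fin N → EuclideanSpace ℝ (Fin 3))
    (hδX : ∀ m, |δ m 0| ≤ ΔX / 2)
    (hδY : ∀ m, |δ m 1| ≤ ΔY / 2)
    (hδT : ∀ m, |δ m 2| ≤ ΔT / 2)
    (p : EuclideanSpace ℝ (Fin 3)) :
    |(μ + α * ∑ m, g (p - u m - δ m)) - (μ + α * ∑ m, g (p - u m)) +
      α * ∑ m, ⟪δ m, gradient g (p - u m)⟫| ≤
      α * N * M / 8 * (ΔX ^ 2 + ΔY ^ 2 + ΔT ^ 2) := by
  have hM : 0 ≤ M := by
    have h := hlip 0 (EuclideanSpace.single 0 1)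
    have hn : ‖(0 : EuclideanSpace ℝ (Fin 3)) - EuclideanSpace.single 0 1‖ = 1 := by
      rw [zero_sub, norm_neg, EuclideanSpace.norm_single]
      norm_num
    rw [hn, mul_one] at h
    exact le_trans (norm_nonneg _) h
  have hnormsq : ∀ m, ‖δ m‖ ^ 2 ≤ (ΔX ^ 2 + ΔY ^ 2 + ΔT ^ 2) / 4 := by
    intro m
    have h : ‖δ m‖ ^ 2 = (δ m 0) ^ 2 + (δ m 1) ^ 2 + (δ m 2) ^ 2 := by
      rw [EuclideanSpace.norm_eq, Real.sq_sqrt (by positivity)]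
      rw [Fin.sum_univ_three]
      simp [sq_abs]
    rw [h]
    have h0 : (δ m 0) ^ 2 ≤ (ΔX / 2) ^ 2 := by
      rw [← sq_abs]; exact pow_le_pow_left₀ (abs_nonneg _) (hδX m) 2
    have h1 : (δ m 1) ^ 2 ≤ (ΔY / 2) ^ 2 := by
      rw [← sq_abs]; exact pow_le_pow_left₀ (abs_nonneg _) (hδY m) 2
    have h2 : (δ m 2) ^ 2 ≤ (ΔT / 2) ^ 2 := by
      rw [← sq_abs]; exact pow_le_pow_left₀ (abs_nonneg _) (hδT m) 2
    nlinarith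
  have hterm : ∀ m, |g (p - u m - δ m) - g (p - u m) + ⟪δ m, gradient g (p - u m)⟫|
      ≤ M / 8 * (ΔX ^ 2 + ΔY ^ 2 + ΔT ^ 2) := by
    intro m
    calc |g (p - u m - δ m) - g (p - u m) + ⟪δ m, gradient g (p - u m)⟫|
        ≤ M / 2 * ‖δ m‖ ^ 2 := taylor_key g M hM hg hlip (p - u m) (δ m)
      _ ≤ M / 2 * ((ΔX ^ 2 + ΔY ^ 2 + ΔT ^ 2) / 4) := by gcongr; exact hnormsq m
      _ = M / 8 * (ΔX ^ 2 + ΔY ^ 2 + ΔT ^ 2) := by ring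
  have hS : (μ + α * ∑ m, g (p - u m - δ m)) - (μ + α * ∑ m, g (p - u m)) +
      α * ∑ m, ⟪δ m, gradient g (p - u m)⟫ =
      α * ∑ m, (g (p - u m - δ m) - g (p - u m) + ⟪δ m, gradient g (p - u m)⟫) := by
    rw [Finset.sum_add_distrib, Finset.sum_sub_distrib]
    ring
  rw [hS, abs_mul, abs_of_nonneg hα]
  calc α * |∑ m, (g (p - u m - δ m) - g (p - u m) + ⟪δ m, gradient g (p - u m)⟫)|
      ≤ α * ∑ m, |g (p - u m - δ m) - g (p - u m) + ⟪δ m, gradient g (p - u m)⟫| :=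
        mul_le_mul_of_nonneg_left (Finset.abs_sum_le_sum_abs _ _) hα
    _ ≤ α * ∑ _m : Fin N, M / 8 * (ΔX ^ 2 + ΔY ^ 2 + ΔT ^ 2) := by
        exact mul_le_mul_of_nonneg_left (Finset.sum_le_sum fun m _ => hterm m) hα
    _ = α * N * M / 8 * (ΔX ^ 2 + ΔY ^ 2 + ΔT ^ 2) := by
        rw [Finset.sum_const, Finset.card_univ, Fintype.card_fin]
        push_cast; ring
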